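/- There exists R > 0 such that for every point M ∈ ℝ² ∖ P with ‖M‖ > R at which both T and T∘T are defined, T(T(M)) − M belongs to the set {a_1, …, a_n, −a_1, …, −a_n} of signed spoke vectors of P. -/

import Mathlib

open MeasureTheory

/-- The planar wedge (cross) product: `u ∧ v = uₓ v_y − u_y vₓ`. -/
def wedge (u v : ℝ × ℝ) : ℝ := u.1 * v.2 - u.2 * v.1

/-- The angle in `[0, π)` of the line directed by the nonzero vector `u`. -/
noncomputable def lineAngle (u : ℝ × ℝ) : ℝ :=
  let θ := Complex.arg ⟨u.1, u.2⟩
  if θ < 0 then θ + Real.pi else if θ = Real.pi then 0 else θ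

/-- A finite family of real numbers is commensurate if they are all nonzero and all
pairwise ratios are rational. -/
def Commensurate {m : ℕ} (α : Fin m → ℝ) : Prop :=
  (∀ i, α i ≠ 0) ∧ ∀ i j, ∃ q : ℚ, α i = (q : ℝ) * α j

/-- A convex polygon in the plane with `n ≥ 3` vertices listed in counterclockwise order,
no three vertices collinear, no two edges parallel, together with the data describing
the slope ordering of its edges and, for each edge, the (unique) vertex farthest from
its supporting line.  Edge `i` (in slope order) is the segment from
`vertex (σ i)` to `vertex (σ i + 1)`. -/
structure ConvexPolygonSpokes (n : ℕ) [NeZero n] where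
  three_le : 3 ≤ n
  vertex : Fin n → ℝ × ℝ
  /-- every vertex lies strictly to the left of each directed edge: this encodes
  convexity, the counterclockwise orientation, and that no three vertices are collinear -/
  convex_ccw : ∀ i j : Fin n, j ≠ i → j ≠ i + 1 →
    0 < wedge (vertex (i + 1) - vertex i) (vertex j - vertex i)
  /-- no two edges are parallel -/
  no_parallel : ∀ i j : Fin n, i ≠ j →
    wedge (vertex (i + 1) - vertex i) (vertex (j + 1) - vertex j) ≠ 0
  /-- the permutation re-indexing the edges by slope -/
  σ : Equiv.Perm (Fin n)
  /-- the angles in `[0, π)` of the supporting lines are strictly increasing in slope order -/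
  slope_sorted : StrictMono fun i : Fin n => lineAngle (vertex (σ i + 1) - vertex (σ i))
  /-- index of the vertex of the polygon farthest (in Euclidean distance, equivalently in
  the absolute wedge with the edge direction) from the supporting line of the `i`-th edge -/
  wIdx : Fin n → Fin n
  wIdx_farthest : ∀ i j : Fin n, j ≠ wIdx i →
    |wedge (vertex (σ i + 1) - vertex (σ i)) (vertex j - vertex (σ i))| <
    |wedge (vertex (σ i + 1) - vertex (σ i)) (vertex (wIdx i) - vertex (σ i))|

namespace ConvexPolygonSpokes

variable {n : ℕ} [NeZero n] (P : ConvexPolygonSpokes n)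

/-- Direction vector of the `i`-th edge (in slope order). -/
def dir (i : Fin n) : ℝ × ℝ := P.vertex (P.σ i + 1) - P.vertex (P.σ i)

/-- `v i`: the second endpoint of the `i`-th edge in the counterclockwise traversal. -/
def v (i : Fin n) : ℝ × ℝ := P.vertex (P.σ i + 1)

/-- `w i`: the vertex farthest from the supporting line of the `i`-th edge. -/
def w (i : Fin n) : ℝ × ℝ := P.vertex (P.wIdx i)

/-- The spoke vector of the `i`-th edge: `a i = 2 (w i − v i)`. -/
def a (i : Fin n) : ℝ × ℝ := (2 : ℝ) • (P.w i - P.v i)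

/-- `d i`: the unique vector parallel to edge `i` such that `a i + d i` is parallel to
edge `i+1` (written explicitly; it exists and is unique since edges `i` and `i+1`
are not parallel). -/
noncomputable def d (i : Fin n) : ℝ × ℝ :=
  (-(wedge (P.dir (i + 1)) (P.a i)) / wedge (P.dir (i + 1)) (P.dir i)) • P.dir i

/-- The polygon (as a convex body): the convex hull of its vertices. -/
def polygon : Set (ℝ × ℝ) := convexHull ℝ (Set.range P.vertex)

/-- The closed strip bounded by the supporting line of the `i`-th edge and the parallel
line through the vertex `w i` farthest from it. -/
def strip (i : Fin n) : Set (ℝ × ℝ) :=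
  {p | 0 ≤ wedge (P.dir i) (p - P.vertex (P.σ i)) ∧
    wedge (P.dir i) (p - P.vertex (P.σ i)) ≤ wedge (P.dir i) (P.w i - P.vertex (P.σ i))}

/-- `OBStep M N` holds when the outer billiard map is defined at `M ∈ ℝ² ∖ P` — i.e. there
is a vertex `A` of `P` with `(A − M) ∧ (p − M) ≤ 0` for all `p ∈ P`, with equality only
for `p = A` — and `N = 2A − M` is the image of `M`. -/
def OBStep (M N : ℝ × ℝ) : Prop :=
  M ∉ P.polygon ∧ ∃ k : Fin n,
    (∀ p ∈ P.polygon, wedge (P.vertex k - M) (p - M) ≤ 0) ∧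
    (∀ p ∈ P.polygon, wedge (P.vertex k - M) (p - M) = 0 → p = P.vertex k) ∧
    N = (2 : ℝ) • P.vertex k - M

/-- A forward orbit of the outer billiard map. -/
def IsOrbit (M : ℕ → ℝ × ℝ) : Prop := ∀ k : ℕ, P.OBStep (M k) (M (k + 1))

/-- `P` is quasi-rational: the numbers `|a i ∧ a (i+1)|` are nonzero and commensurate. -/
def QuasiRational : Prop :=
  Commensurate fun i : Fin n => |wedge (P.a i) (P.a (i + 1))|

/-- `P` is rational: all its vertices lie on a lattice of `ℝ²`. -/
def Rational : Prop :=
  ∃ b₁ b₂ : ℝ × ℝ, LinearIndependent ℝ ![b₁, b₂] ∧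
    ∀ k : Fin n, ∃ m l : ℤ, P.vertex k = (m : ℝ) • b₁ + (l : ℝ) • b₂

/-- The system `d₁ + a₁ + t₂ a₂ + ⋯ + t_{i−1} a_{i−1} = t_i d_i` (for `i = 2, …, n`),
`d₁ + a₁ + t₂ a₂ + ⋯ + t_n a_n = −d₁` has a rational solution `(t₂, …, t_n)`
(indices shifted down by one: paper index `i` is `Fin`-index `i − 1`). -/
def SystemHasRatSolution : Prop :=
  ∃ t : Fin n → ℚ,
    (∀ i : Fin n, 0 < i →
      P.d 0 + P.a 0 + ∑ j ∈ Finset.Ioo 0 i, (t j : ℝ) • P.a j = (t i : ℝ) • P.d i) ∧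
    P.d 0 + P.a 0 + ∑ j ∈ Finset.Ioi (0 : Fin n), (t j : ℝ) • P.a j = - P.d 0

end ConvexPolygonSpokes

-- ==== auxiliary development (added) ====
namespace ConvexPolygonSpokes

variable {n : ℕ} [NeZero n] (P : ConvexPolygonSpokes n)

-- ############ auxiliary development ############

lemma wedge_GP (x y z w : ℝ × ℝ) :
    wedge x y * wedge z w - wedge x z * wedge y w + wedge x w * wedge y z = 0 := by
  simp only [wedge]; ring

lemma wedge_cramer (a b u : ℝ × ℝ) :
    wedge a b • u = wedge u b • a + wedge a u • b := by
  ext <;> simp only [wedge, Prod.smul_fst, Prod.smul_snd, Prod.fst_add, Prod.snd_add,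
    smul_eq_mul] <;> ring

lemma wedge_add_self (u x : ℝ × ℝ) : wedge u (x + u) = wedge u x := by
  simp only [wedge, Prod.fst_add, Prod.snd_add]; ring

lemma wedge_sub (u x y : ℝ × ℝ) : wedge u (x - y) = wedge u x - wedge u y := by
  simp only [wedge, Prod.fst_sub, Prod.snd_sub]; ring

lemma wedge_self (u : ℝ × ℝ) : wedge u u = 0 := by simp only [wedge]; ring

lemma wedge_sub_self (u y : ℝ × ℝ) : wedge u (y - u) = wedge u y := by
  rw [wedge_sub, wedge_self, sub_zero]

lemma wedge_smul_left (t : ℝ) (u v : ℝ × ℝ) : wedge (t • u) v = t * wedge u v := by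
  simp only [wedge, Prod.smul_fst, Prod.smul_snd, smul_eq_mul]; ring

lemma wedge_skew (u v : ℝ × ℝ) : wedge u v = - wedge v u := by
  simp only [wedge]; ring

-- Fin n facts, n ≥ 3
open Fin.NatCast in
lemma fin_two_ne (h3 : 3 ≤ n) : (2 : Fin n) ≠ 0 := by
  have h2 : ((2:ℕ) : Fin n) = (2 : Fin n) := by norm_cast
  rw [← h2, Ne, Fin.natCast_eq_zero]
  intro hd; have := Nat.le_of_dvd (by norm_num) hd; omega

open Fin.NatCast in
lemma fin_one_ne (h3 : 3 ≤ n) : (1 : Fin n) ≠ 0 := by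
  have h2 : ((1:ℕ) : Fin n) = (1 : Fin n) := by norm_cast
  rw [← h2, Ne, Fin.natCast_eq_zero]
  intro hd; have := Nat.le_of_dvd (by norm_num) hd; omega

lemma fin_add_one_ne (h3 : 3 ≤ n) (k : Fin n) : k + 1 ≠ k := by
  intro h
  have h0 : k + 1 = k + 0 := by rw [add_zero]; exact h
  exact fin_one_ne h3 (add_left_cancel h0)

lemma fin_sub_one_ne (h3 : 3 ≤ n) (k : Fin n) : k - 1 ≠ k := by
  intro h
  have h' : k - 1 + 1 = k + 1 := by rw [h]
  rw [sub_add_cancel] at h'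
  exact fin_add_one_ne h3 k h'.symm

lemma fin_add_one_ne_sub (h3 : 3 ≤ n) (k : Fin n) : k + 1 ≠ k - 1 := by
  intro h
  have h' : k + 1 + 1 = k - 1 + 1 := by rw [h]
  rw [sub_add_cancel] at h'
  have h'' : k + 2 = k + 0 := by
    rw [add_zero, show k + 2 = k + 1 + 1 by rw [add_assoc]; congr 1; ext; simp [Fin.val_add]]; exact h'
  exact fin_two_ne h3 (add_left_cancel h'')

/-- direction of the polygon-order edge from `vertex k` to `vertex (k+1)` -/
def edg (k : Fin n) : ℝ × ℝ := P.vertex (k + 1) - P.vertex k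

lemma edg_eq_sub (k : Fin n) : P.edg (k - 1) = P.vertex k - P.vertex (k - 1) := by
  unfold edg; rw [sub_add_cancel]

lemma edg_skew_pos (k : Fin n) : 0 < wedge (P.edg (k - 1)) (P.edg k) := by
  have h1 : k + 1 ≠ k - 1 := fin_add_one_ne_sub P.three_le k
  have h2 : k + 1 ≠ (k - 1) + 1 := by rw [sub_add_cancel]; exact fin_add_one_ne P.three_le k
  have h := P.convex_ccw (k - 1) (k + 1) h1 h2
  have hveq : P.vertex (k+1) - P.vertex (k-1) = P.edg k + P.edg (k - 1) := by
    rw [edg_eq_sub]; unfold edg; abel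
  rw [sub_add_cancel, ← P.edg_eq_sub k, hveq, wedge_add_self] at h
  exact h

lemma edg_ne (j m : Fin n) (h : j ≠ m) : wedge (P.edg j) (P.edg m) ≠ 0 :=
  P.no_parallel j m h

lemma edg_nonneg (m p : Fin n) : 0 ≤ wedge (P.edg m) (P.vertex p - P.vertex m) := by
  by_cases hp : p = m
  · subst hp; simp [wedge]
  by_cases hp1 : p = m + 1
  · subst hp1
    have : P.vertex (m+1) - P.vertex m = P.edg m := rfl
    rw [this, wedge_self]
  · exact le_of_lt (P.convex_ccw m p hp hp1)

lemma edg_pos (m p : Fin n) (hp : p ≠ m) (hp1 : p ≠ m + 1) :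
    0 < wedge (P.edg m) (P.vertex p - P.vertex m) := P.convex_ccw m p hp hp1

lemma edg_base_shift (m p : Fin n) :
    wedge (P.edg (m-1)) (P.vertex p - P.vertex m)
      = wedge (P.edg (m-1)) (P.vertex p - P.vertex (m-1)) := by
  have : P.vertex p - P.vertex m = (P.vertex p - P.vertex (m-1)) - P.edg (m-1) := by
    rw [edg_eq_sub]; abel
  rw [this, wedge_sub_self]

/-- Claim A: strict local max conditions imply strict global max over vertices. -/
lemma vertex_lt (c : ℝ × ℝ) (m : Fin n)
    (hc1 : wedge c (P.edg m) < 0) (hc2 : 0 < wedge c (P.edg (m-1))) :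
    ∀ p, p ≠ m → wedge c (P.vertex p - P.vertex m) < 0 := by
  intro p hp
  set x := P.vertex p - P.vertex m with hx
  have hGP := wedge_GP c (P.edg m) (P.edg (m-1)) x
  have hs : 0 < wedge (P.edg (m-1)) (P.edg m) := P.edg_skew_pos m
  have hs' : wedge (P.edg m) (P.edg (m-1)) < 0 := by
    rw [wedge_skew]; linarith
  have hA : 0 ≤ wedge (P.edg m) x := P.edg_nonneg m p
  have hB : 0 ≤ wedge (P.edg (m-1)) x := by
    rw [hx, edg_base_shift]; exact P.edg_nonneg (m-1) p
  have hpos : 0 < wedge c (P.edg (m-1)) * wedge (P.edg m) x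
      + (- wedge c (P.edg m)) * wedge (P.edg (m-1)) x := by
    by_cases hp1 : p = m + 1
    · have hz : wedge (P.edg m) x = 0 := by
        rw [hx, hp1]
        have : P.vertex (m+1) - P.vertex m = P.edg m := rfl
        rw [this, wedge_self]
      have hBpos : 0 < wedge (P.edg (m-1)) x := by
        rw [hx, edg_base_shift]
        refine P.edg_pos (m-1) p ?_ ?_
        · rw [hp1]; exact fin_add_one_ne_sub P.three_le m
        · rw [sub_add_cancel, hp1]; exact fin_add_one_ne P.three_le m
      nlinarith
    · have hApos : 0 < wedge (P.edg m) x := P.edg_pos m p hp hp1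
      nlinarith
  -- from GP : wedge c x * wedge (edg m) (edg (m-1)) = T2 - T1
  nlinarith [hGP, hs', hpos]

lemma dir_eq_edg (i : Fin n) : P.dir i = P.edg (P.σ i) := rfl

lemma wIdx_max (i p : Fin n) (hp : p ≠ P.wIdx i) :
    wedge (P.edg (P.σ i)) (P.vertex p - P.vertex (P.σ i)) <
    wedge (P.edg (P.σ i)) (P.vertex (P.wIdx i) - P.vertex (P.σ i)) := by
  have h := P.wIdx_farthest i p hp
  have hnn1 : 0 ≤ wedge (P.edg (P.σ i)) (P.vertex p - P.vertex (P.σ i)) :=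
    P.edg_nonneg (P.σ i) p
  have hnn2 : 0 ≤ wedge (P.edg (P.σ i)) (P.vertex (P.wIdx i) - P.vertex (P.σ i)) :=
    P.edg_nonneg (P.σ i) (P.wIdx i)
  have hd : P.vertex (P.σ i + 1) - P.vertex (P.σ i) = P.edg (P.σ i) := rfl
  rw [hd] at h
  rwa [abs_of_nonneg hnn1, abs_of_nonneg hnn2] at h

lemma argmax_eq (j m : Fin n)
    (h1 : wedge (P.edg j) (P.edg m) < 0) (h2 : 0 < wedge (P.edg j) (P.edg (m-1))) :
    P.wIdx (P.σ.symm j) = m := by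
  by_contra hne
  have hσ : P.σ (P.σ.symm j) = j := P.σ.apply_symm_apply j
  have hm_ne : m ≠ P.wIdx (P.σ.symm j) := fun h => hne h.symm
  have hA : wedge (P.edg j) (P.vertex (P.wIdx (P.σ.symm j)) - P.vertex m) < 0 :=
    P.vertex_lt (P.edg j) m h1 h2 _ (fun h => hne h)
  have hB := P.wIdx_max (P.σ.symm j) m hm_ne
  rw [hσ] at hB
  have : wedge (P.edg j) (P.vertex (P.wIdx (P.σ.symm j)) - P.vertex m)
      = wedge (P.edg j) (P.vertex (P.wIdx (P.σ.symm j)) - P.vertex j)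
        - wedge (P.edg j) (P.vertex m - P.vertex j) := by
    rw [← wedge_sub]; congr 1; abel
  rw [this] at hA
  linarith

/-- `Good k l`: the vector from vertex `k` to vertex `l` is a (half-)spoke. -/
def Good (k l : Fin n) : Prop :=
  ∃ i, P.vertex l - P.vertex k = P.w i - P.v i ∨ P.vertex l - P.vertex k = -(P.w i - P.v i)

/-- The central cone lemma. -/
lemma cone_lemma (k l : Fin n) (u : ℝ × ℝ) (hu : u ≠ 0)
    (h1 : wedge u (P.edg k) ≤ 0) (h2 : 0 ≤ wedge u (P.edg (k-1)))
    (h3 : 0 ≤ wedge u (P.edg l)) (h4 : wedge u (P.edg (l-1)) ≤ 0) :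
    P.Good k l := by
  set a := P.edg (k-1) with ha
  set b := P.edg k with hb
  set c := P.edg (l-1) with hc
  set d := P.edg l with hd
  have hab : 0 < wedge a b := P.edg_skew_pos k
  have hcd : 0 < wedge c d := P.edg_skew_pos l
  rcases lt_trichotomy (wedge a c) 0 with hac | hac | hac
  · -- W(a,c) < 0 : show W(c,b) < 0 and conclude wIdx (σ⁻¹ (l-1)) = k
    have hlk : l - 1 ≠ k := by
      intro h
      rw [ha, hc, h] at hac
      linarith [P.edg_skew_pos k]
    have hcb_ne : wedge c b ≠ 0 := P.edg_ne (l-1) k hlk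
    have hcb : wedge c b < 0 := by
      rcases hcb_ne.lt_or_gt with h | h
      · exact h
      exfalso
      have hGP := wedge_GP u c a b
      -- wedge u c * wedge a b - wedge u a * wedge c b + wedge u b * wedge c a = 0
      have hca : 0 < wedge c a := by rw [wedge_skew]; linarith
      have t1 : wedge u c * wedge a b ≤ 0 := mul_nonpos_of_nonpos_of_nonneg h4 hab.le
      have t2 : wedge u b * wedge c a ≤ 0 := mul_nonpos_of_nonpos_of_nonneg h1 hca.le
      have t3 : 0 ≤ wedge u a * wedge c b := mul_nonneg h2 h.le
      have huc : wedge u c = 0 := by nlinarith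
      have hub : wedge u b = 0 := by nlinarith
      have hcr := wedge_cramer c b u
      rw [hub, wedge_skew c u, huc] at hcr
      simp only [neg_zero, zero_smul, add_zero] at hcr
      rcases smul_eq_zero.mp hcr with h0 | h0
      · exact hcb_ne h0
      · exact hu h0
    have hca : 0 < wedge c a := by rw [wedge_skew]; linarith
    have hw := P.argmax_eq (l-1) k hcb hca
    refine ⟨P.σ.symm (l-1), Or.inr ?_⟩
    have hv : P.v (P.σ.symm (l-1)) = P.vertex l := by
      unfold v; rw [P.σ.apply_symm_apply, sub_add_cancel]
    have hwv : P.w (P.σ.symm (l-1)) = P.vertex k := by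
      unfold w; rw [hw]
    rw [hv, hwv]; abel
  · -- W(a,c) = 0 : forces k = l and u = 0, contradiction
    exfalso
    have hkl : k - 1 = l - 1 := by
      by_contra hne
      exact P.edg_ne (k-1) (l-1) hne hac
    have hkl' : k = l := by
      have := congrArg (· + 1) hkl
      simpa [sub_add_cancel] using this
    subst hkl'
    have hub : wedge u b = 0 := le_antisymm h1 h3
    have hua : wedge u a = 0 := le_antisymm h4 h2
    have hcr := wedge_cramer a b u
    rw [hub, wedge_skew a u, hua] at hcr
    simp only [neg_zero, zero_smul, add_zero] at hcr
    rcases smul_eq_zero.mp hcr with h0 | h0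
    · exact (ne_of_gt hab) h0
    · exact hu h0
  · -- W(a,c) > 0 : show W(a,d) < 0 and conclude wIdx (σ⁻¹ (k-1)) = l
    have hlk : l ≠ k - 1 := by
      intro h
      have hseq : wedge a c = - wedge c d := by
        rw [wedge_skew a c, neg_inj]
        congr 1
        rw [ha, hd, h]
      linarith
    have had_ne : wedge a d ≠ 0 := P.edg_ne (k-1) l (fun h => hlk h.symm)
    have had : wedge a d < 0 := by
      rcases had_ne.lt_or_gt with h | h
      · exact h
      exfalso
      have hGP := wedge_GP u a c d
      -- wedge u a * wedge c d - wedge u c * wedge a d + wedge u d * wedge a c = 0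
      have t1 : 0 ≤ wedge u a * wedge c d := mul_nonneg h2 hcd.le
      have t2 : 0 ≤ wedge u d * wedge a c := mul_nonneg h3 hac.le
      have t3 : wedge u c * wedge a d ≤ 0 := mul_nonpos_of_nonpos_of_nonneg h4 h.le
      have hua : wedge u a = 0 := by nlinarith
      have hud : wedge u d = 0 := by nlinarith
      have hcr := wedge_cramer a d u
      rw [hud, wedge_skew a u, hua] at hcr
      simp only [neg_zero, zero_smul, add_zero] at hcr
      rcases smul_eq_zero.mp hcr with h0 | h0
      · exact had_ne h0
      · exact hu h0
    have hw := P.argmax_eq (k-1) l had hac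
    refine ⟨P.σ.symm (k-1), Or.inl ?_⟩
    have hv : P.v (P.σ.symm (k-1)) = P.vertex k := by
      unfold v; rw [P.σ.apply_symm_apply, sub_add_cancel]
    have hwv : P.w (P.σ.symm (k-1)) = P.vertex l := by
      unfold w; rw [hw]
    rw [hv, hwv]

lemma wedge_sub_left (x y v : ℝ × ℝ) : wedge (x - y) v = wedge x v - wedge y v := by
  simp only [wedge, Prod.fst_sub, Prod.snd_sub]; ring

lemma wedge_zero_left (v : ℝ × ℝ) : wedge 0 v = 0 := by simp [wedge]

lemma wedge_zero_right (v : ℝ × ℝ) : wedge v 0 = 0 := by simp [wedge]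

lemma abs_wedge_le (x y : ℝ × ℝ) : |wedge x y| ≤ 2 * ‖x‖ * ‖y‖ := by
  have h1 : |x.1| ≤ ‖x‖ := by simpa using norm_fst_le x
  have h2 : |x.2| ≤ ‖x‖ := by simpa using norm_snd_le x
  have h3 : |y.1| ≤ ‖y‖ := by simpa using norm_fst_le y
  have h4 : |y.2| ≤ ‖y‖ := by simpa using norm_snd_le y
  calc |wedge x y| ≤ |x.1 * y.2| + |x.2 * y.1| := abs_sub _ _
    _ = |x.1| * |y.2| + |x.2| * |y.1| := by rw [abs_mul, abs_mul]
    _ ≤ ‖x‖ * ‖y‖ + ‖x‖ * ‖y‖ := by gcongr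
    _ = 2 * ‖x‖ * ‖y‖ := by ring

lemma cont_wedge_left (v : ℝ × ℝ) : Continuous (fun u => wedge u v) := by
  simp only [wedge]; fun_prop

lemma eps_lemma (k l : Fin n) : ∃ ε : ℝ, 0 < ε ∧ ∀ u : ℝ × ℝ, ‖u‖ = 1 →
    wedge u (P.edg k) ≤ 0 → 0 ≤ wedge u (P.edg (k-1)) →
    -ε ≤ wedge u (P.edg l) → wedge u (P.edg (l-1)) ≤ ε → P.Good k l := by
  by_cases hg : P.Good k l
  · exact ⟨1, one_pos, fun _ _ _ _ _ _ => hg⟩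
  set S : Set (ℝ × ℝ) := Metric.sphere 0 1 ∩
    {u | wedge u (P.edg k) ≤ 0 ∧ 0 ≤ wedge u (P.edg (k-1))} with hS
  have hSc : IsCompact S := (isCompact_sphere 0 1).inter_right
    ((isClosed_le (cont_wedge_left _) continuous_const).inter
      (isClosed_le continuous_const (cont_wedge_left _)))
  by_cases hne : S.Nonempty
  · set g : ℝ × ℝ → ℝ := fun u => max (-(wedge u (P.edg l))) (wedge u (P.edg (l-1)))
      with hgdef
    have hgc : Continuous g := ((cont_wedge_left _).neg).max (cont_wedge_left _)
    obtain ⟨u₀, hu₀S, hmin⟩ := hSc.exists_isMinOn hne hgc.continuousOn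
    have hu₀n : ‖u₀‖ = 1 := by
      have := hu₀S.1
      simpa [Metric.mem_sphere, dist_zero_right] using this
    have hg0 : 0 < g u₀ := by
      by_contra hgle
      push_neg at hgle
      have h3 : 0 ≤ wedge u₀ (P.edg l) := by
        have := (le_max_left (-(wedge u₀ (P.edg l))) (wedge u₀ (P.edg (l-1)))).trans hgle
        linarith
      have h4 : wedge u₀ (P.edg (l-1)) ≤ 0 :=
        (le_max_right (-(wedge u₀ (P.edg l))) (wedge u₀ (P.edg (l-1)))).trans hgle
      have hu0 : u₀ ≠ 0 := by
        intro h; rw [h] at hu₀n; simp at hu₀n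
      exact hg (P.cone_lemma k l u₀ hu0 hu₀S.2.1 hu₀S.2.2 h3 h4)
    refine ⟨g u₀ / 2, by linarith, ?_⟩
    intro u hn h1 h2 h3 h4
    exfalso
    have huS : u ∈ S := ⟨by simpa [Metric.mem_sphere, dist_zero_right] using hn, h1, h2⟩
    have hmins := isMinOn_iff.mp hmin u huS
    have hgu : g u ≤ g u₀ / 2 := max_le (by linarith) h4
    linarith
  · refine ⟨1, one_pos, ?_⟩
    intro u hn h1 h2 _ _
    exact absurd (⟨u, ⟨by simpa [Metric.mem_sphere, dist_zero_right] using hn, h1, h2⟩⟩ :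
      S.Nonempty) hne

lemma eps_global : ∃ ε : ℝ, 0 < ε ∧ ∀ k l : Fin n, ∀ u : ℝ × ℝ, ‖u‖ = 1 →
    wedge u (P.edg k) ≤ 0 → 0 ≤ wedge u (P.edg (k-1)) →
    -ε ≤ wedge u (P.edg l) → wedge u (P.edg (l-1)) ≤ ε → P.Good k l := by
  have H : ∀ kl : Fin n × Fin n, ∃ ε : ℝ, 0 < ε ∧ ∀ u : ℝ × ℝ, ‖u‖ = 1 →
      wedge u (P.edg kl.1) ≤ 0 → 0 ≤ wedge u (P.edg (kl.1-1)) →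
      -ε ≤ wedge u (P.edg kl.2) → wedge u (P.edg (kl.2-1)) ≤ ε → P.Good kl.1 kl.2 :=
    fun kl => P.eps_lemma kl.1 kl.2
  choose ε hε using H
  haveI : Nonempty (Fin n × Fin n) := ⟨(0, 0)⟩
  have hnz : (Finset.univ : Finset (Fin n × Fin n)).Nonempty := Finset.univ_nonempty
  refine ⟨Finset.univ.inf' hnz ε, ?_, ?_⟩
  · rw [Finset.lt_inf'_iff]
    exact fun kl _ => (hε kl).1
  · intro k l u hn h1 h2 h3 h4
    have hle : Finset.univ.inf' hnz ε ≤ ε (k, l) :=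
      Finset.inf'_le _ (Finset.mem_univ _)
    exact (hε (k, l)).2 u hn h1 h2 (le_trans (by linarith) h3) (le_trans h4 (by linarith))

lemma obstep_pivot {M N : ℝ × ℝ} (h : P.OBStep M N) :
    ∃ k, N = (2:ℝ) • P.vertex k - M ∧
      wedge (P.vertex k - M) (P.edg k) < 0 ∧
      0 < wedge (P.vertex k - M) (P.edg (k-1)) := by
  obtain ⟨hM, k, hle, heq, hN⟩ := h
  have hmem1 : P.vertex (k+1) ∈ P.polygon := subset_convexHull ℝ _ (Set.mem_range_self _)
  have hmem2 : P.vertex (k-1) ∈ P.polygon := subset_convexHull ℝ _ (Set.mem_range_self _)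
  have hrw1 : P.vertex (k+1) - M = P.edg k + (P.vertex k - M) := by unfold edg; abel
  have hrw2 : P.vertex (k-1) - M = (P.vertex k - M) - P.edg (k-1) := by
    rw [edg_eq_sub]; abel
  refine ⟨k, hN, ?_, ?_⟩
  · have e1 := hle _ hmem1
    rw [hrw1, wedge_add_self] at e1
    rcases e1.lt_or_eq with h' | h'
    · exact h'
    exfalso
    have hzz : wedge (P.vertex k - M) (P.vertex (k+1) - M) = 0 := by
      rw [hrw1, wedge_add_self]; exact h'
    have := heq _ hmem1 hzz
    have hE : P.edg k = 0 := by unfold edg; rw [this, sub_self]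
    have := P.edg_skew_pos k
    rw [hE, wedge_zero_right] at this
    exact lt_irrefl 0 this
  · have e2 := hle _ hmem2
    rw [hrw2, wedge_sub, wedge_self] at e2
    -- e2 : 0 - wedge u (edg (k-1)) ≤ 0
    rcases (by linarith : 0 ≤ wedge (P.vertex k - M) (P.edg (k-1))).lt_or_eq with h' | h'
    · exact h'
    exfalso
    have hzz : wedge (P.vertex k - M) (P.vertex (k-1) - M) = 0 := by
      rw [hrw2, wedge_sub, wedge_self, ← h']; ring
    have := heq _ hmem2 hzz
    have hE : P.edg (k-1) = 0 := by rw [edg_eq_sub, this, sub_self]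
    have := P.edg_skew_pos k
    rw [hE, wedge_zero_left] at this
    exact lt_irrefl 0 this

theorem far_double_step_is_spoke_translation' :
    ∃ R : ℝ, 0 < R ∧ ∀ M N L : ℝ × ℝ, R < ‖M‖ →
      P.OBStep M N → P.OBStep N L →
      ∃ i : Fin n, L - M = P.a i ∨ L - M = -(P.a i) := by
  obtain ⟨ε₀, hε₀, hprop⟩ := P.eps_global
  haveI : Nonempty (Fin n) := ⟨0⟩
  set V := 1 + Finset.univ.sup' Finset.univ_nonempty (fun j => ‖P.vertex j‖) with hV
  have hVj : ∀ j, ‖P.vertex j‖ ≤ V := fun j => by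
    have := Finset.le_sup' (fun j => ‖P.vertex j‖) (Finset.mem_univ j)
    rw [hV]; linarith
  have hV1 : 1 ≤ V := by
    have h0 : 0 ≤ ‖P.vertex 0‖ := norm_nonneg _
    have := Finset.le_sup' (fun j => ‖P.vertex j‖) (Finset.mem_univ (0:Fin n))
    rw [hV]; linarith
  have hV0 : 0 < V := by linarith
  refine ⟨V + 8*V^2/ε₀, by positivity, ?_⟩
  intro M N L hM hMN hNL
  obtain ⟨k, hNdef, hk1, hk2⟩ := P.obstep_pivot hMN
  obtain ⟨l, hLdef, hl1, hl2⟩ := P.obstep_pivot hNL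
  set u := P.vertex k - M with hu
  have hMu : ‖M‖ - V ≤ ‖u‖ := by
    have h1 : ‖M‖ - ‖P.vertex k‖ ≤ ‖M - P.vertex k‖ := norm_sub_norm_le _ _
    have h2 : ‖M - P.vertex k‖ = ‖u‖ := by rw [hu, norm_sub_rev]
    have := hVj k; linarith
  have hu_big : 8*V^2/ε₀ < ‖u‖ := by linarith
  have hu_pos : 0 < ‖u‖ := lt_of_le_of_lt (by positivity) hu_big
  have key : 8*V^2 < ε₀ * ‖u‖ := by
    rw [div_lt_iff₀ hε₀] at hu_big
    linarith [mul_comm ‖u‖ ε₀]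
  have hu' : P.vertex l - N = (P.vertex l - P.vertex k) - u := by
    rw [hNdef, hu, two_smul]; abel
  rw [hu', wedge_sub_left] at hl1 hl2
  have hdiffnorm : ‖P.vertex l - P.vertex k‖ ≤ 2*V :=
    le_trans (norm_sub_le _ _) (by have := hVj l; have := hVj k; linarith)
  have hEnorm : ∀ j, ‖P.edg j‖ ≤ 2*V := fun j =>
    le_trans (norm_sub_le _ _) (by have := hVj (j+1); have := hVj j; linarith)
  have hbound : ∀ j, |wedge (P.vertex l - P.vertex k) (P.edg j)| ≤ 8*V^2 := fun j => by
    have h1 := abs_wedge_le (P.vertex l - P.vertex k) (P.edg j)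
    have h2 := hEnorm j
    nlinarith [norm_nonneg (P.vertex l - P.vertex k), norm_nonneg (P.edg j), hdiffnorm]
  set uhat := ‖u‖⁻¹ • u with huhatdef
  have huhatn : ‖uhat‖ = 1 := by
    rw [huhatdef, norm_smul, norm_inv, norm_norm, inv_mul_cancel₀ (ne_of_gt hu_pos)]
  have hinv_pos : 0 < ‖u‖⁻¹ := inv_pos.mpr hu_pos
  have hcancel : ‖u‖⁻¹ * (ε₀ * ‖u‖) = ε₀ := by field_simp
  have h1' : wedge uhat (P.edg k) ≤ 0 := by
    rw [huhatdef, wedge_smul_left]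
    exact mul_nonpos_of_nonneg_of_nonpos hinv_pos.le hk1.le
  have h2' : 0 ≤ wedge uhat (P.edg (k-1)) := by
    rw [huhatdef, wedge_smul_left]
    exact mul_nonneg hinv_pos.le hk2.le
  have h3' : -ε₀ ≤ wedge uhat (P.edg l) := by
    rw [huhatdef, wedge_smul_left]
    have hb := abs_le.mp (hbound l)
    have hW : -(ε₀*‖u‖) ≤ wedge u (P.edg l) := by linarith
    have hmul := mul_le_mul_of_nonneg_left hW hinv_pos.le
    rw [mul_neg, hcancel] at hmul
    linarith
  have h4' : wedge uhat (P.edg (l-1)) ≤ ε₀ := by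
    rw [huhatdef, wedge_smul_left]
    have hb := abs_le.mp (hbound (l-1))
    have hW : wedge u (P.edg (l-1)) ≤ ε₀*‖u‖ := by linarith
    have hmul := mul_le_mul_of_nonneg_left hW hinv_pos.le
    rw [hcancel] at hmul
    linarith
  obtain ⟨i, hcase⟩ := hprop k l uhat huhatn h1' h2' h3' h4'
  refine ⟨i, ?_⟩
  have hLM : L - M = (2:ℝ) • (P.vertex l - P.vertex k) := by
    rw [hLdef, hNdef, smul_sub]; abel
  rcases hcase with hcs | hcs
  · left; rw [hLM, hcs]; rfl
  · right; rw [hLM, hcs, smul_neg]; rfl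

end ConvexPolygonSpokes


/-- far enough from the polygon, the square of the outer billiard map is a
translation by one of the signed spoke vectors: there is `R > 0` such that whenever
`‖M‖ > R`, `T` is defined at `M` with image `N`, and `T` is defined at `N` with image
`L`, then `L − M ∈ {±a 1, …, ±a n}`. -/
theorem far_double_step_is_spoke_translation {n : ℕ} [NeZero n]
    (P : ConvexPolygonSpokes n) :
    ∃ R : ℝ, 0 < R ∧ ∀ M N L : ℝ × ℝ, R < ‖M‖ →
      P.OBStep M N → P.OBStep N L →
      ∃ i : Fin n, L - M = P.a i ∨ L - M = -(P.a i) := by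
  exact P.far_double_step_is_spoke_translation'
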